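/- Let S be an inverse semigroup and let η : S → S be an ordered function (a ≤ b implies η(a) ≤ η(b)) that preserves the heap operation, i.e. η(a*b⁻¹*c) = η(a)*(η(b))⁻¹*η(c) for all a, b, c ∈ S. Then the function φ : S → S defined by φ(a) = η(a)*(η(a⁻¹*a))⁻¹ is an ordered premorphism of S. -/
import Mathlib


/-- An inverse semigroup: a semigroup in which every element `a` has a
(unique) inverse `a⁻¹` with `a * a⁻¹ * a = a` and `a⁻¹ * a * a⁻¹ = a⁻¹`. -/
class InverseSemigroup (S : Type*) extends Semigroup S, Inv S where
  mul_inv_mul : ∀ a : S, a * a⁻¹ * a = a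
  inv_mul_inv : ∀ a : S, a⁻¹ * a * a⁻¹ = a⁻¹
  inv_unique : ∀ a b : S, a * b * a = a → b * a * b = b → b = a⁻¹

/-- The natural partial order on an inverse semigroup:
`a ≤ b` iff `a = e * b` for some idempotent `e`. -/
def npo {S : Type*} [InverseSemigroup S] (a b : S) : Prop :=
  ∃ e : S, e * e = e ∧ a = e * b

/-- A premorphism of inverse semigroups: `θ (a * b) ≤ θ a * θ b` in the
natural partial order of the codomain. -/
def IsPremorphism {S T : Type*} [InverseSemigroup S] [InverseSemigroup T]
    (θ : S → T) : Prop :=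
  ∀ a b : S, npo (θ (a * b)) (θ a * θ b)

namespace ISAux

variable {S : Type*} [InverseSemigroup S]

lemma mim (a : S) : a * a⁻¹ * a = a := InverseSemigroup.mul_inv_mul a
lemma imi (a : S) : a⁻¹ * a * a⁻¹ = a⁻¹ := InverseSemigroup.inv_mul_inv a

lemma inv_inv' (a : S) : (a⁻¹)⁻¹ = a :=
  (InverseSemigroup.inv_unique a⁻¹ a (imi a) (mim a)).symm

lemma idem_inv {e : S} (he : e * e = e) : e⁻¹ = e :=
  (InverseSemigroup.inv_unique e e (by rw [he, he]) (by rw [he, he])).symm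

lemma ii (a : S) : (a⁻¹ * a) * (a⁻¹ * a) = a⁻¹ * a := by
  rw [← mul_assoc, imi]

lemma ii' (a : S) : (a * a⁻¹) * (a * a⁻¹) = a * a⁻¹ := by
  rw [← mul_assoc, mim]

lemma idem_pull {e : S} (he : e * e = e) (y : S) : e * (e * y) = e * y := by
  rw [← mul_assoc, he]

lemma imi_r (a x : S) : a⁻¹ * (a * (a⁻¹ * x)) = a⁻¹ * x := by
  rw [← mul_assoc, ← mul_assoc, imi]

lemma mim_r (a x : S) : a * (a⁻¹ * (a * x)) = a * x := by
  rw [← mul_assoc, ← mul_assoc, mim]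

lemma mul_idem {e f : S} (he : e * e = e) (hf : f * f = f) :
    (e * f) * (e * f) = e * f := by
  have h1 : (e * f) * (f * ((e * f)⁻¹ * e)) * (e * f) = e * f := by
    simp only [mul_assoc]
    rw [idem_pull hf, idem_pull he, ← mul_assoc e f, ← mul_assoc, mim]
  have h2 : (f * ((e * f)⁻¹ * e)) * (e * f) * (f * ((e * f)⁻¹ * e))
      = f * ((e * f)⁻¹ * e) := by
    simp only [mul_assoc]
    rw [idem_pull he, idem_pull hf, ← mul_assoc e f, imi_r]
  have ht : f * ((e * f)⁻¹ * e) = (e * f)⁻¹ :=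
    InverseSemigroup.inv_unique (e * f) _ h1 h2
  have htid : (e * f)⁻¹ * (e * f)⁻¹ = (e * f)⁻¹ := by
    calc (e * f)⁻¹ * (e * f)⁻¹
        = (f * ((e * f)⁻¹ * e)) * (f * ((e * f)⁻¹ * e)) := by rw [ht]
      _ = f * ((e * f)⁻¹ * ((e * f) * ((e * f)⁻¹ * e))) := by
          simp only [mul_assoc]
      _ = f * ((e * f)⁻¹ * e) := by rw [imi_r]
      _ = (e * f)⁻¹ := ht
  have hef : e * f = (e * f)⁻¹ := by
    have h3 := idem_inv htid
    rw [inv_inv'] at h3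
    exact h3
  rw [hef]; exact htid

lemma idem_comm {e f : S} (he : e * e = e) (hf : f * f = f) :
    e * f = f * e := by
  have hefid := mul_idem he hf
  have hfeid := mul_idem hf he
  have h4 : (e * f) * (f * e) * (e * f) = e * f := by
    simp only [mul_assoc]
    rw [idem_pull hf, idem_pull he]
    simpa only [mul_assoc] using hefid
  have h5 : (f * e) * (e * f) * (f * e) = f * e := by
    simp only [mul_assoc]
    rw [idem_pull he, idem_pull hf]
    simpa only [mul_assoc] using hfeid
  have h6 : f * e = (e * f)⁻¹ := InverseSemigroup.inv_unique (e * f) (f * e) h4 h5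
  rw [idem_inv hefid] at h6
  exact h6.symm

lemma mul_inv_rev' (a b : S) : (a * b)⁻¹ = b⁻¹ * a⁻¹ := by
  have h1 : (a * b) * (b⁻¹ * a⁻¹) * (a * b) = a * b := by
    calc (a * b) * (b⁻¹ * a⁻¹) * (a * b)
        = a * ((b * b⁻¹) * (a⁻¹ * a)) * b := by simp only [mul_assoc]
      _ = a * ((a⁻¹ * a) * (b * b⁻¹)) * b := by rw [idem_comm (ii' b) (ii a)]
      _ = (a * a⁻¹ * a) * (b * b⁻¹ * b) := by simp only [mul_assoc]
      _ = a * b := by rw [mim, mim]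
  have h2 : (b⁻¹ * a⁻¹) * (a * b) * (b⁻¹ * a⁻¹) = b⁻¹ * a⁻¹ := by
    calc (b⁻¹ * a⁻¹) * (a * b) * (b⁻¹ * a⁻¹)
        = b⁻¹ * ((a⁻¹ * a) * (b * b⁻¹)) * a⁻¹ := by simp only [mul_assoc]
      _ = b⁻¹ * ((b * b⁻¹) * (a⁻¹ * a)) * a⁻¹ := by rw [idem_comm (ii a) (ii' b)]
      _ = (b⁻¹ * b * b⁻¹) * (a⁻¹ * a * a⁻¹) := by simp only [mul_assoc]
      _ = b⁻¹ * a⁻¹ := by rw [imi, imi]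
  exact (InverseSemigroup.inv_unique (a * b) (b⁻¹ * a⁻¹) h1 h2).symm

lemma mim' (b : S) : b * (b⁻¹ * b) = b := by rw [← mul_assoc, mim]

lemma expand (b x : S) : b * x = b * ((b⁻¹ * b) * x) := by
  conv_lhs => rw [← mim b]
  simp only [mul_assoc]

lemma npo_refl (a : S) : npo a a := ⟨a * a⁻¹, ii' a, (mim a).symm⟩

lemma npo_of_right {a b f : S} (hf : f * f = f) (h : a = b * f) : npo a b := by
  refine ⟨a * a⁻¹, ii' a, ?_⟩
  have haa : a * a⁻¹ = b * (f * b⁻¹) := by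
    rw [h, mul_inv_rev', idem_inv hf]
    simp only [mul_assoc]
    rw [idem_pull hf]
  calc a = b * f := h
    _ = b * ((b⁻¹ * b) * f) := by
        conv_lhs => rw [← mim b]
        simp only [mul_assoc]
    _ = b * (f * (b⁻¹ * b)) := by rw [idem_comm (ii b) hf]
    _ = (b * (f * b⁻¹)) * b := by simp only [mul_assoc]
    _ = (a * a⁻¹) * b := by rw [← haa]

lemma npo_to_right {a b : S} (h : npo a b) :
    ∃ f : S, f * f = f ∧ a = b * f := by
  obtain ⟨e, he, hab⟩ := h
  refine ⟨a⁻¹ * a, ii a, ?_⟩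
  have hai : a⁻¹ = b⁻¹ * e := by rw [hab, mul_inv_rev', idem_inv he]
  calc a = e * b := hab
    _ = e * (b * (b⁻¹ * b)) := by
        conv_lhs => rw [← mim b]; simp only [mul_assoc]
    _ = e * ((b * b⁻¹) * b) := by simp only [mul_assoc]
    _ = (e * (b * b⁻¹)) * b := by rw [← mul_assoc]
    _ = ((b * b⁻¹) * e) * b := by rw [idem_comm he (ii' b)]
    _ = b * ((b⁻¹ * e) * b) := by simp only [mul_assoc]
    _ = b * (a⁻¹ * a) := by
        rw [hai, hab]
        simp only [mul_assoc]
        rw [idem_pull he]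

lemma npo_mul {a b c d : S} (h1 : npo a b) (h2 : npo c d) :
    npo (a * c) (b * d) := by
  obtain ⟨e, he, hab⟩ := h1
  obtain ⟨f, hf, hcd⟩ := h2
  have hbfb : (b * (f * b⁻¹)) * (b * (f * b⁻¹)) = b * (f * b⁻¹) := by
    calc (b * (f * b⁻¹)) * (b * (f * b⁻¹))
        = b * (f * ((b⁻¹ * b) * (f * b⁻¹))) := by simp only [mul_assoc]
      _ = b * ((f * (b⁻¹ * b)) * (f * b⁻¹)) := by simp only [mul_assoc]
      _ = b * (((b⁻¹ * b) * f) * (f * b⁻¹)) := by rw [idem_comm hf (ii b)]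
      _ = b * ((b⁻¹ * b) * (f * (f * b⁻¹))) := by simp only [mul_assoc]
      _ = b * ((b⁻¹ * b) * (f * b⁻¹)) := by rw [idem_pull hf]
      _ = (b * (b⁻¹ * (b * (f * b⁻¹)))) := by simp only [mul_assoc]
      _ = b * (f * b⁻¹) := by rw [mim_r]
  refine ⟨e * (b * (f * b⁻¹)), mul_idem he hbfb, ?_⟩
  have step : b * (f * d) = b * (f * b⁻¹) * (b * d) := by
    calc b * (f * d) = b * ((b⁻¹ * b) * (f * d)) := expand b (f * d)
      _ = b * (((b⁻¹ * b) * f) * d) := by simp only [mul_assoc]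
      _ = b * ((f * (b⁻¹ * b)) * d) := by rw [idem_comm (ii b) hf]
      _ = b * (f * b⁻¹) * (b * d) := by simp only [mul_assoc]
  calc a * c = e * b * (f * d) := by rw [hab, hcd]
    _ = e * (b * (f * d)) := by simp only [mul_assoc]
    _ = e * (b * (f * b⁻¹) * (b * d)) := by rw [step]
    _ = e * (b * (f * b⁻¹)) * (b * d) := by simp only [mul_assoc]

lemma npo_inv {a b : S} (h : npo a b) : npo a⁻¹ b⁻¹ := by
  obtain ⟨e, he, hab⟩ := h
  refine npo_of_right he ?_
  rw [hab, mul_inv_rev', idem_inv he]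

end ISAux

open ISAux in
theorem heap_preserving_gives_premorphism {S : Type*} [InverseSemigroup S]
    (η : S → S)
    (hord : ∀ a b : S, npo a b → npo (η a) (η b))
    (hheap : ∀ a b c : S, η (a * b⁻¹ * c) = η a * (η b)⁻¹ * η c) :
    (∀ a b : S, npo a b →
        npo (η a * (η (a⁻¹ * a))⁻¹) (η b * (η (b⁻¹ * b))⁻¹)) ∧
      IsPremorphism (fun a => η a * (η (a⁻¹ * a))⁻¹) := by
  have key : ∀ a b : S, η a * (η (a⁻¹ * a))⁻¹ * η b = η (a * b) := by
    intro a b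
    rw [← hheap a (a⁻¹ * a) b]
    congr 1
    rw [idem_inv (ii a), mim']
  constructor
  · intro a b h
    exact npo_mul (hord _ _ h) (npo_inv (hord _ _ (npo_mul (npo_inv h) h)))
  · intro a b
    simp only
    have hr : η a * (η (a⁻¹ * a))⁻¹ * (η b * (η (b⁻¹ * b))⁻¹)
        = η (a * b) * (η (b⁻¹ * b))⁻¹ := by
      rw [← mul_assoc, key]
    rw [hr]
    have h2 : npo (a⁻¹ * (a * b)) b := ⟨a⁻¹ * a, ii a, (mul_assoc a⁻¹ a b).symm⟩
    have h3 := npo_mul (npo_refl b⁻¹) h2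
    have he : (a * b)⁻¹ * (a * b) = b⁻¹ * (a⁻¹ * (a * b)) := by
      rw [mul_inv_rev']; simp only [mul_assoc]
    have h1 : npo ((a * b)⁻¹ * (a * b)) (b⁻¹ * b) := by rw [he]; exact h3
    exact npo_mul (npo_refl (η (a * b))) (npo_inv (hord _ _ h1))
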